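/- Every minimal k-polar obstruction with exactly k+2 connected components has at least one trivial connected component (an isolated vertex). -/

import Mathlib

/-- A graph is `(s,k)`-polar if its vertices can be partitioned into `A` (fibers of `f` below `s`)
inducing a complete multipartite graph with at most `s` parts, and `B` (fibers in `[s, s+k)`)
inducing a disjoint union of at most `k` cliques, with no edges between distinct parts of `B`
and all edges between distinct parts of `A`. -/
def IsSKPolar {V : Type*} (G : SimpleGraph V) (s k : ℕ) : Prop :=
  ∃ f : V → ℕ, (∀ v, f v < s + k) ∧
    (∀ u v, u ≠ v → f u < s → f v < s → (G.Adj u v ↔ f u ≠ f v)) ∧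
    (∀ u v, u ≠ v → s ≤ f u → s ≤ f v → (G.Adj u v ↔ f u = f v))

/-- A minimal `(s,k)`-polar obstruction: not `(s,k)`-polar, but every proper induced
subgraph is `(s,k)`-polar. -/
def IsMinimalPolarObstruction {V : Type*} (G : SimpleGraph V) (s k : ℕ) : Prop :=
  ¬ IsSKPolar G s k ∧ ∀ S : Set V, S ≠ Set.univ → IsSKPolar (G.induce S) s k

/-- Every minimal `k`-polar obstruction with exactly `k+2` connected components
has at least one trivial connected component, i.e., an isolated vertex. -/
theorem minimal_kPolar_obstruction_kplus2_components_has_isolated {k : ℕ} (hk : 0 < k)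
    {V : Type*} [Fintype V] (G : SimpleGraph V)
    (hG : IsMinimalPolarObstruction G k k)
    (hcomp : Nat.card G.ConnectedComponent = k + 2) :
    ∃ v : V, ∀ u : V, ¬ G.Adj v u := by
  classical
  by_contra hiso
  push_neg at hiso
  -- hiso : ∀ v, ∃ u, G.Adj v u
  have hVne : Nonempty V := by
    by_contra hV
    rw [not_nonempty_iff] at hV
    have : IsEmpty G.ConnectedComponent :=
      ⟨fun D => D.exists_rep.elim (fun w _ => hV.false w)⟩
    rw [Nat.card_eq_zero.mpr (Or.inl this)] at hcomp
    omega
  obtain ⟨v⟩ := hVne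
  set S : Set V := {x | x ≠ v} with hSdef
  have hSne : S ≠ Set.univ := fun h => (h ▸ Set.mem_univ v : v ∈ S) rfl
  obtain ⟨f, hf1, hf2, hf3⟩ := hG.2 S hSne
  have hadj : ∀ (a b : S), (G.induce S).Adj a b ↔ G.Adj a b := fun a b => Iff.rfl
  have key : ∃ C0 : G.ConnectedComponent, ∀ D : G.ConnectedComponent, D ≠ C0 →
      ∃ u : S, G.connectedComponentMk ↑u = D ∧ k ≤ f u := by
    by_cases hA : ∃ a b : S, f a < k ∧ f b < k ∧ f a ≠ f b
    · obtain ⟨a, b, ha, hb, hab⟩ := hA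
      have hane : a ≠ b := fun h => hab (by rw [h])
      have haadj : G.Adj ↑a ↑b := (hadj a b).mp ((hf2 a b hane ha hb).mpr hab)
      refine ⟨G.connectedComponentMk ↑a, ?_⟩
      have hinC0 : ∀ u : S, f u < k →
          G.connectedComponentMk ↑u = G.connectedComponentMk ↑a := by
        intro u hu
        by_cases h1 : f u = f a
        · have hub : u ≠ b := fun h => hab (h1.symm.trans (h ▸ rfl : f u = f b))
          have h2 : f u ≠ f b := h1 ▸ hab
          have hadj2 : G.Adj ↑u ↑b := (hadj u b).mp ((hf2 u b hub hu hb).mpr h2)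
          calc G.connectedComponentMk ↑u = G.connectedComponentMk ↑b :=
                SimpleGraph.ConnectedComponent.sound hadj2.reachable
            _ = G.connectedComponentMk ↑a :=
                SimpleGraph.ConnectedComponent.sound haadj.symm.reachable
        · have hua : u ≠ a := fun h => h1 (by rw [h])
          have hadj2 : G.Adj ↑u ↑a := (hadj u a).mp ((hf2 u a hua hu ha).mpr h1)
          exact SimpleGraph.ConnectedComponent.sound hadj2.reachable
      intro D hD
      obtain ⟨w, hw'⟩ := D.exists_rep
      have hw : G.connectedComponentMk w = D := hw'
      by_cases hwv : w = v
      · obtain ⟨x, hx⟩ := hiso v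
        have hxv : x ≠ v := fun h => G.loopless.irrefl v (h ▸ hx)
        refine ⟨⟨x, hxv⟩, ?_, ?_⟩
        · have hxcomp : G.connectedComponentMk x = G.connectedComponentMk v :=
            SimpleGraph.ConnectedComponent.sound hx.symm.reachable
          rw [hxcomp, ← hwv, hw]
        · by_contra hlt
          push_neg at hlt
          apply hD
          rw [← hw, hwv]
          have h1 : G.connectedComponentMk v = G.connectedComponentMk x :=
            SimpleGraph.ConnectedComponent.sound hx.reachable
          rw [h1]
          exact hinC0 ⟨x, hxv⟩ hlt
      · by_cases hwk : k ≤ f ⟨w, hwv⟩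
        · exact ⟨⟨w, hwv⟩, hw, hwk⟩
        · push_neg at hwk
          exact absurd (hw ▸ hinC0 ⟨w, hwv⟩ hwk) hD
    · push_neg at hA
      refine ⟨G.connectedComponentMk v, ?_⟩
      intro D hD
      obtain ⟨w, hw'⟩ := D.exists_rep
      have hw : G.connectedComponentMk w = D := hw'
      have hwv : w ≠ v := by rintro rfl; exact hD hw.symm
      obtain ⟨x, hx⟩ := hiso w
      have hxw : x ≠ w := fun h => G.loopless.irrefl w (h ▸ hx)
      have hxv : x ≠ v := by
        rintro rfl
        apply hD
        rw [← hw]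
        exact SimpleGraph.ConnectedComponent.sound hx.reachable
      by_cases h1 : k ≤ f ⟨w, hwv⟩
      · exact ⟨⟨w, hwv⟩, hw, h1⟩
      · by_cases h2 : k ≤ f ⟨x, hxv⟩
        · refine ⟨⟨x, hxv⟩, ?_, h2⟩
          rw [← hw]
          exact (SimpleGraph.ConnectedComponent.sound hx.reachable).symm
        · push_neg at h1 h2
          have heq := hA ⟨w, hwv⟩ ⟨x, hxv⟩ h1 h2
          have hne : (⟨w, hwv⟩ : S) ≠ ⟨x, hxv⟩ := by
            intro h
            exact hxw (congrArg Subtype.val h).symm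
          exact (((hf2 _ _ hne h1 h2).mp ((hadj _ _).mpr hx)) heq).elim
  obtain ⟨C0, hC0⟩ := key
  set F : G.ConnectedComponent → ℕ := fun D =>
    if h : D = C0 then 2 * k else f (hC0 D h).choose with hFdef
  have hFk : ∀ D, k ≤ F D ∧ F D ≤ 2 * k := by
    intro D
    by_cases h : D = C0
    · simp only [hFdef, dif_pos h]; omega
    · simp only [hFdef, dif_neg h]
      have h1 := (hC0 D h).choose_spec.2
      have h2 := hf1 (hC0 D h).choose
      omega
  have hFinj : Function.Injective F := by
    intro D D' hDD'
    by_cases h : D = C0 <;> by_cases h' : D' = C0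
    · rw [h, h']
    · exfalso
      simp only [hFdef, dif_pos h, dif_neg h'] at hDD'
      have := hf1 (hC0 D' h').choose
      omega
    · exfalso
      simp only [hFdef, dif_neg h, dif_pos h'] at hDD'
      have := hf1 (hC0 D h).choose
      omega
    · simp only [hFdef, dif_neg h, dif_neg h'] at hDD'
      obtain ⟨hm, hkk⟩ := (hC0 D h).choose_spec
      obtain ⟨hm', hkk'⟩ := (hC0 D' h').choose_spec
      by_cases huu : (hC0 D h).choose = (hC0 D' h').choose
      · rw [← hm, ← hm', huu]
      · have hadj2 : G.Adj ↑(hC0 D h).choose ↑(hC0 D' h').choose :=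
          (hadj _ _).mp ((hf3 _ _ huu hkk hkk').mpr hDD')
        rw [← hm, ← hm']
        exact SimpleGraph.ConnectedComponent.sound hadj2.reachable
  have hrange : ∀ D, F D - k < k + 1 := fun D => by have := hFk D; omega
  have hinj2 : Function.Injective (fun D => (⟨F D - k, hrange D⟩ : Fin (k + 1))) := by
    intro D D' h
    apply hFinj
    have h1 := (hFk D).1
    have h2 := (hFk D').1
    have h3 : F D - k = F D' - k := congrArg Fin.val h
    omega
  have hle : Nat.card G.ConnectedComponent ≤ k + 1 := by
    calc Nat.card G.ConnectedComponent ≤ Nat.card (Fin (k + 1)) :=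
          Nat.card_le_card_of_injective _ hinj2
      _ = k + 1 := by simp
  omega
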